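/- Let S be a set of variable-vertices with |S| ≤ ζ·SMALL in a factor graph satisfying the Plausibility Assumption. Then the closure cl(S), defined as the union of all S-closed τ-subgraphs with at most SMALL constraint-vertices, has at most SMALL constraint-vertices and revenue at most |S|. -/
import Mathlib


open scoped Classical
open Finset

namespace CSP

variable {Cn Vr : Type*} [Fintype Cn] [Fintype Vr] [DecidableEq Cn] [DecidableEq Vr]

/-- Constraint-vertices of an edge-induced subgraph (given as a set of edges). -/
def consOf (H : Finset (Cn × Vr)) : Finset Cn := H.image Prod.fst

/-- Variable-vertices of an edge-induced subgraph. -/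
def vbls (H : Finset (Cn × Vr)) : Finset Vr := H.image Prod.snd

/-- Degree of a constraint-vertex within `H`. -/
def degC (H : Finset (Cn × Vr)) (f : Cn) : ℕ := (H.filter fun e => e.1 = f).card

/-- Degree of a variable-vertex within `H`. -/
def degV (H : Finset (Cn × Vr)) (v : Vr) : ℕ := (H.filter fun e => e.2 = v).card

/-- Leaf variable-vertices: those of degree exactly 1. -/
def leaves (H : Finset (Cn × Vr)) : Finset Vr := (vbls H).filter fun v => degV H v = 1

/-- Revenue: one credit per leaf variable-vertex, minus a debit for each excess edge
(edges beyond 2 at a variable-vertex, beyond `τ` at a constraint-vertex). -/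
def revenue (τ : ℕ) (H : Finset (Cn × Vr)) : ℝ :=
  ((leaves H).card : ℝ)
    - (((∑ v ∈ vbls H, (degV H v - 2)) + ∑ f ∈ consOf H, (degC H f - τ) : ℕ) : ℝ)

/-- A `τ`-subgraph: every constraint-vertex has degree at least `τ`. -/
def IsTau (τ : ℕ) (H : Finset (Cn × Vr)) : Prop := ∀ f ∈ consOf H, τ ≤ degC H f

/-- Plausibility: income `R(H) - ζ·|consOf H|` is nonnegative. -/
def Plausible (τ : ℕ) (ζ : ℝ) (H : Finset (Cn × Vr)) : Prop :=
  ζ * ((consOf H).card : ℝ) ≤ revenue τ H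

/-- The Plausibility Assumption for a factor graph with edge set `E`. -/
def PlausibilityAssumption (τ : ℕ) (ζ : ℝ) (SMALL : ℕ) (E : Finset (Cn × Vr)) : Prop :=
  ∀ H ⊆ E, IsTau τ H → (consOf H).card ≤ 2 * SMALL → Plausible τ ζ H

/-- `S`-closed: a `τ`-subgraph all of whose leaf variable-vertices lie in `S`. -/
def SClosed (τ : ℕ) (S : Finset Vr) (H : Finset (Cn × Vr)) : Prop :=
  IsTau τ H ∧ leaves H ⊆ S

/-- The closure of `S`: the union of all small `S`-closed `τ`-subgraphs of `E`. -/
noncomputable def closure (τ SMALL : ℕ) (E : Finset (Cn × Vr)) (S : Finset Vr) :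
    Finset (Cn × Vr) :=
  (E.powerset.filter fun H => SClosed τ S H ∧ (consOf H).card ≤ SMALL).sup id

end CSP

open CSP

section Aux

set_option linter.unusedSectionVars false
variable {Cn Vr : Type*} [Fintype Cn] [Fintype Vr] [DecidableEq Cn] [DecidableEq Vr]

lemma aux_consOf_union (A B : Finset (Cn × Vr)) :
    consOf (A ∪ B) = consOf A ∪ consOf B := Finset.image_union _ _

lemma aux_degC_mono {A B : Finset (Cn × Vr)} (h : A ⊆ B) (f : Cn) :
    degC A f ≤ degC B f :=
  Finset.card_le_card (Finset.filter_subset_filter _ h)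

lemma aux_degV_mono {A B : Finset (Cn × Vr)} (h : A ⊆ B) (v : Vr) :
    degV A v ≤ degV B v :=
  Finset.card_le_card (Finset.filter_subset_filter _ h)

lemma aux_mem_vbls {H : Finset (Cn × Vr)} {v : Vr} :
    v ∈ vbls H ↔ 0 < degV H v := by
  simp [vbls, degV, Finset.card_pos, Finset.filter_nonempty_iff, Finset.mem_image]

lemma aux_vbls_mono {A B : Finset (Cn × Vr)} (h : A ⊆ B) : vbls A ⊆ vbls B :=
  Finset.image_subset_image h

lemma aux_sclosed_union (τ : ℕ) (S : Finset Vr) {A B : Finset (Cn × Vr)}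
    (hA : SClosed τ S A) (hB : SClosed τ S B) : SClosed τ S (A ∪ B) := by
  constructor
  · intro f hf
    rw [aux_consOf_union, Finset.mem_union] at hf
    rcases hf with hf | hf
    · exact le_trans (hA.1 f hf) (aux_degC_mono Finset.subset_union_left f)
    · exact le_trans (hB.1 f hf) (aux_degC_mono Finset.subset_union_right f)
  · intro v hv
    rw [leaves, Finset.mem_filter] at hv
    obtain ⟨hmem, hdeg⟩ := hv
    have : v ∈ vbls A ∨ v ∈ vbls B := by
      rw [vbls, Finset.image_union, Finset.mem_union] at hmem; exact hmem
    rcases this with h | h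
    · have h1 : 0 < degV A v := aux_mem_vbls.mp h
      have h2 : degV A v ≤ 1 := hdeg ▸ aux_degV_mono Finset.subset_union_left v
      exact hA.2 (Finset.mem_filter.mpr ⟨h, le_antisymm h2 h1⟩)
    · have h1 : 0 < degV B v := aux_mem_vbls.mp h
      have h2 : degV B v ≤ 1 := hdeg ▸ aux_degV_mono Finset.subset_union_right v
      exact hB.2 (Finset.mem_filter.mpr ⟨h, le_antisymm h2 h1⟩)

lemma aux_sclosed_empty (τ : ℕ) (S : Finset Vr) : SClosed τ S (∅ : Finset (Cn × Vr)) := by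
  constructor
  · intro f hf; simp [consOf] at hf
  · intro v hv; simp [leaves, vbls] at hv

/-- Key step: a small-ish `S`-closed subgraph of `E` actually has few constraints. -/
lemma aux_small {τ SMALL : ℕ} {ζ : ℝ} (hζ0 : 0 < ζ) {E : Finset (Cn × Vr)}
    (hPA : PlausibilityAssumption τ ζ SMALL E) {S : Finset Vr}
    (hS : (S.card : ℝ) ≤ ζ * SMALL) {H : Finset (Cn × Vr)} (hHE : H ⊆ E)
    (hcl : SClosed τ S H) (hc : (consOf H).card ≤ 2 * SMALL) :
    (consOf H).card ≤ SMALL := by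
  have hrev : ζ * ((consOf H).card : ℝ) ≤ revenue τ H := hPA H hHE hcl.1 hc
  have hlv : revenue τ H ≤ ((leaves H).card : ℝ) := by
    unfold revenue
    have : (0 : ℝ) ≤ (((∑ v ∈ vbls H, (degV H v - 2)) + ∑ f ∈ consOf H, (degC H f - τ) : ℕ) : ℝ) :=
      Nat.cast_nonneg _
    linarith
  have hls : ((leaves H).card : ℝ) ≤ (S.card : ℝ) := by
    exact_mod_cast Finset.card_le_card hcl.2
  have : ζ * ((consOf H).card : ℝ) ≤ ζ * (SMALL : ℝ) := by linarith
  have := le_of_mul_le_mul_left this hζ0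
  exact_mod_cast this

end Aux

/-- If `|S| ≤ ζ·SMALL` and the factor graph satisfies the Plausibility Assumption, then
the closure `cl(S)` has at most `SMALL` constraint-vertices and revenue at most `|S|`. -/
theorem stmt_4 {Cn Vr : Type*} [Fintype Cn] [Fintype Vr] [DecidableEq Cn] [DecidableEq Vr]
    (τ SMALL : ℕ) (hτ : 3 ≤ τ) (hSMALL : 1 ≤ SMALL)
    (ζ : ℝ) (hζ0 : 0 < ζ) (hζ1 : ζ < 1)
    (E : Finset (Cn × Vr)) (hPA : PlausibilityAssumption τ ζ SMALL E)
    (S : Finset Vr) (hS : (S.card : ℝ) ≤ ζ * SMALL) :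
    (consOf (closure τ SMALL E S)).card ≤ SMALL ∧
      revenue τ (closure τ SMALL E S) ≤ (S.card : ℝ) := by
  set P : Finset (Cn × Vr) → Prop :=
    fun U => U ⊆ E ∧ SClosed τ S U ∧ (consOf U).card ≤ SMALL with hP
  have key : P (closure τ SMALL E S) := by
    unfold CSP.closure
    apply Finset.sup_induction
    · exact ⟨Finset.empty_subset _, aux_sclosed_empty τ S, by simp [consOf]⟩
    · rintro a ⟨haE, hacl, hac⟩ b ⟨hbE, hbcl, hbc⟩
      refine ⟨Finset.union_subset haE hbE, aux_sclosed_union τ S hacl hbcl, ?_⟩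
      apply aux_small hζ0 hPA hS (Finset.union_subset haE hbE)
        (aux_sclosed_union τ S hacl hbcl)
      calc (consOf (a ∪ b)).card ≤ (consOf a ∪ consOf b).card := by
            rw [aux_consOf_union]
        _ ≤ (consOf a).card + (consOf b).card := Finset.card_union_le _ _
        _ ≤ 2 * SMALL := by omega
    · intro H hH
      rw [Finset.mem_filter, Finset.mem_powerset] at hH
      exact ⟨hH.1, hH.2.1, hH.2.2⟩
  obtain ⟨hE, hcl, hc⟩ := key
  refine ⟨hc, ?_⟩
  have hlv : revenue τ (closure τ SMALL E S) ≤ ((leaves (closure τ SMALL E S)).card : ℝ) := by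
    unfold revenue
    have : (0 : ℝ) ≤ (((∑ v ∈ vbls (closure τ SMALL E S), (degV (closure τ SMALL E S) v - 2)) +
        ∑ f ∈ consOf (closure τ SMALL E S), (degC (closure τ SMALL E S) f - τ) : ℕ) : ℝ) :=
      Nat.cast_nonneg _
    linarith
  have hls : ((leaves (closure τ SMALL E S)).card : ℝ) ≤ (S.card : ℝ) := by
    exact_mod_cast Finset.card_le_card hcl.2
  linarith
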